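/- Let N ≥ 2, α, β, ψ ∈ ℝ, ε > 0, and let Q1, Q2 ≥ 1 with Q1 + Q2 = N, q1 = Q1/N, q2 = Q2/N. Let a ∈ ℝ^N be such that a_i ∈ {0, π} for exactly Q1 indices i and a_i ∈ {ψ, ψ+π} for the remaining Q2 indices. Then the characteristic polynomial of the linearization matrix J(a) equals X · (X + ε)^{N(N−1)+1} · P1(X)^{Q1−1} · P2(X)^{Q2−1} · P3(X), where P1(X) = X² + (1/2)(sin(α−β) − q1 sin(α+β) − q2 sin(−2ψ+α+β) + 2ε) X − ε q1 sin(α+β) − ε q2 sin(−2ψ+α+β), P2(X) = X² + (1/2)(sin(α−β) − q1 sin(2ψ+α+β) − q2 sin(α+β) + 2ε) X − ε q1 sin(2ψ+α+β) − ε q2 sin(α+β), and P3(X) = X² + (1/2)(sin(α−β) − q1 sin(2ψ+α+β) − q2 sin(−2ψ+α+β) + 2ε) X − ε q1 sin(2ψ+α+β) − ε q2 sin(−2ψ+α+β). -/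

import Mathlib

open Real Matrix Polynomial

section AuxLemmas

lemma sin_mul_cos_aux (u v w : ℝ) :
    Real.sin (u + v) * Real.cos (u + w) = (Real.sin (2*u + v + w) + Real.sin (v - w)) / 2 := by
  have h1 : (2*u + v + w) = (u + v) + (u + w) := by ring
  have h2 : (v - w) = (u + v) - (u + w) := by ring
  rw [h1, h2]
  generalize (u + v) = x
  generalize (u + w) = y
  rw [Real.sin_add, Real.sin_sub]; ring

lemma det_fromBlocks_smul_one {n m R : Type*} [Fintype n] [Fintype m] [DecidableEq n]
    [DecidableEq m] [CommRing R]
    (A : Matrix n n R) (B : Matrix n m R) (Cm : Matrix m n R) (d : R) :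
    (Matrix.fromBlocks A B Cm (d • 1)).det * d ^ Fintype.card n =
      (d • A - B * Cm).det * d ^ Fintype.card m := by
  have h : Matrix.fromBlocks A B Cm (d • (1 : Matrix m m R)) *
      Matrix.fromBlocks (d • (1 : Matrix n n R)) 0 (-Cm) 1
      = Matrix.fromBlocks (d • A - B * Cm) B 0 (d • 1) := by
    simp [Matrix.fromBlocks_multiply, Matrix.mul_smul, Matrix.smul_mul, sub_eq_add_neg]
  have hd := congrArg Matrix.det h
  rw [Matrix.det_mul, Matrix.det_fromBlocks_zero₁₂, Matrix.det_fromBlocks_zero₂₁] at hd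
  simpa [Matrix.det_smul] using hd

lemma det_two_class {ι K : Type*} [Fintype ι] [DecidableEq ι] [Field K]
    (g : ι → Bool) (P : Bool → K) (E : Bool → Bool → K)
    (hP : ∀ s, P s ≠ 0) (n1 n2 : ℕ)
    (h1 : (Finset.univ.filter (fun i => g i = true)).card = n1)
    (h2 : (Finset.univ.filter (fun i => g i = false)).card = n2) :
    (Matrix.of fun i j => (if i = j then P (g i) else 0) + E (g i) (g j)).det
      = P true ^ n1 * P false ^ n2 *
        ((1 + n1 * (E true true / P true)) * (1 + n2 * (E false false / P false))
          - (n1 * (E true false / P true)) * (n2 * (E false true / P false))) := by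
  classical
  set tb : Fin 2 → Bool := ![true, false] with htb
  have htb0 : tb 0 = true := rfl
  have htb1 : tb 1 = false := rfl
  set Δ : Matrix ι ι K := Matrix.diagonal (fun i => P (g i)) with hΔ
  set Δ' : Matrix ι ι K := Matrix.diagonal (fun i => (P (g i))⁻¹) with hΔ'
  set U : Matrix ι (Fin 2) K := Matrix.of (fun i t => E (g i) (tb t)) with hU
  set V : Matrix (Fin 2) ι K := Matrix.of (fun t j => if g j = tb t then 1 else 0) with hV
  have hM : (Matrix.of fun i j => (if i = j then P (g i) else 0) + E (g i) (g j))
      = Δ + U * V := by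
    ext i j
    simp only [Matrix.of_apply, Matrix.add_apply, hΔ, Matrix.diagonal_apply, Matrix.mul_apply,
      hU, hV, Fin.sum_univ_two, htb0, htb1]
    cases hgj : g j <;> by_cases hij : i = j <;> simp [hij, hgj]
  have hΔΔ' : Δ * Δ' = 1 := by
    rw [hΔ, hΔ', Matrix.diagonal_mul_diagonal]
    convert Matrix.diagonal_one
    exact mul_inv_cancel₀ (hP _)
  have hfact : Δ + U * V = Δ * (1 + Δ' * U * V) := by
    rw [Matrix.mul_add, Matrix.mul_one, ← Matrix.mul_assoc, ← Matrix.mul_assoc, hΔΔ',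
      Matrix.one_mul]
  rw [hM, hfact, Matrix.det_mul, Matrix.det_one_add_mul_comm]
  have hDU : Δ' * U = Matrix.of (fun j s => (P (g j))⁻¹ * E (g j) (tb s)) := by
    ext j s
    simp [hΔ', hU, Matrix.diagonal_mul]
  have hW : V * (Δ' * U) = Matrix.of (fun t s =>
      ((Finset.univ.filter (fun j => g j = tb t)).card : K) *
        ((P (tb t))⁻¹ * E (tb t) (tb s))) := by
    rw [hDU]
    ext t s
    rw [Matrix.mul_apply]
    have : ∀ j : ι, V t j * ((P (g j))⁻¹ * E (g j) (tb s))
        = (if g j = tb t then (P (tb t))⁻¹ * E (tb t) (tb s) else 0) := by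
      intro j
      by_cases h : g j = tb t <;> simp [hV, h]
    simp only [Matrix.of_apply] at this ⊢
    rw [Finset.sum_congr rfl (fun j _ => this j), Finset.sum_ite, Finset.sum_const,
      Finset.sum_const_zero, add_zero, nsmul_eq_mul]
  rw [hW]
  have hdΔ : Δ.det = P true ^ n1 * P false ^ n2 := by
    rw [hΔ, Matrix.det_diagonal,
      ← Finset.prod_filter_mul_prod_filter_not Finset.univ (fun i => g i = true)]
    have e1 : ∀ i ∈ Finset.univ.filter (fun i => g i = true), P (g i) = P true := by
      intro i hi; simp only [Finset.mem_filter] at hi; rw [hi.2]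
    have e2 : ∀ i ∈ Finset.univ.filter (fun i => ¬ g i = true), P (g i) = P false := by
      intro i hi; simp only [Finset.mem_filter] at hi
      rw [Bool.not_eq_true] at hi; rw [hi.2]
    rw [Finset.prod_congr rfl e1, Finset.prod_congr rfl e2, Finset.prod_const,
      Finset.prod_const, h1]
    congr 2
    rw [← h2]
    congr 1
    ext i
    simp [Bool.not_eq_true]
  rw [Matrix.det_fin_two]
  simp only [Matrix.add_apply, Matrix.of_apply, Matrix.one_apply, htb0, htb1, h1, h2]
  rw [hdΔ]
  field_simp
  simp only [if_true]
  rw [if_neg (by decide), if_neg (by decide)]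
  ring

lemma core_poly (n r1 r2 q1 q2 del s0 sp sm ε : ℝ) (hn : n ≠ 0)
    (h12 : r1 + r2 = n) (hq1 : q1 = r1 / n) (hq2 : q2 = r2 / n) :
    ((X ^ 2 + C ((1 / 2) * (del - q1 * s0 - q2 * sm + 2 * ε)) * X
        - C (ε * q1 * s0 + ε * q2 * sm))
      + C (r1 : ℝ) * (C ((s0 - del) / (2 * n)) * X + C (ε * s0 / n)))
    * ((X ^ 2 + C ((1 / 2) * (del - q1 * sp - q2 * s0 + 2 * ε)) * X
        - C (ε * q1 * sp + ε * q2 * s0))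
      + C (r2 : ℝ) * (C ((s0 - del) / (2 * n)) * X + C (ε * s0 / n)))
    - (C (r1 : ℝ) * (C ((sm - del) / (2 * n)) * X + C (ε * sm / n)))
      * (C (r2 : ℝ) * (C ((sp - del) / (2 * n)) * X + C (ε * sp / n)))
    = X * (X + C ε) *
      (X ^ 2 + C ((1 / 2) * (del - q1 * sp - q2 * sm + 2 * ε)) * X
        - C (ε * q1 * sp + ε * q2 * sm)) := by
  subst hq1 hq2
  have h2 : r2 = n - r1 := by linarith
  subst h2
  apply Polynomial.funext
  intro x
  simp only [eval_add, eval_sub, eval_mul, eval_pow, eval_X, eval_C]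
  field_simp
  ring

lemma diag_poly (n r1 r2 q1 q2 del s0 st sf ε : ℝ) (hn : n ≠ 0)
    (hq1 : q1 = r1 / n) (hq2 : q2 = r2 / n) :
    (X + C ε) * (X - C (-(1/2) * del - (1/n) * ((s0 - del)/2)
        + (1/(2*n)) * (r1 * st + r2 * sf)))
      - C ((ε/(2*n)) * (r1 * st + r2 * sf + n * del - s0 - del))
    = (X ^ 2 + C ((1 / 2) * (del - q1 * st - q2 * sf + 2 * ε)) * X
        - C (ε * q1 * st + ε * q2 * sf))
      + (C ((s0 - del) / (2 * n)) * X + C (ε * s0 / n)) := by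
  subst hq1 hq2
  apply Polynomial.funext
  intro x
  simp only [eval_add, eval_sub, eval_mul, eval_pow, eval_X, eval_C]
  field_simp
  ring

lemma offdiag_poly (n del s ε : ℝ) (hn : n ≠ 0) :
    (X + C ε) * (- C ((1/(2*n)) * (del - s))) - C (-(ε/(2*n)) * (s + del))
      = C ((s - del) / (2 * n)) * X + C (ε * s / n) := by
  apply Polynomial.funext
  intro x
  simp only [eval_add, eval_sub, eval_mul, eval_neg, eval_X, eval_C]
  field_simp
  ring

end AuxLemmas
/-- The phase block of the linearization of the adaptive phase-oscillator network at a
one-cluster state with phase lags `a`. -/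
noncomputable def linA (N : ℕ) (α β : ℝ) (a : Fin N → ℝ) : Matrix (Fin N) (Fin N) ℝ :=
  Matrix.of fun i j =>
    if i = j then
      -(1 / 2) * Real.sin (α - β) - (1 / (N : ℝ)) * Real.sin β * Real.cos α
        + (1 / (2 * (N : ℝ))) * ∑ k, Real.sin (2 * (a i - a k) + α + β)
    else (1 / (2 * (N : ℝ))) * (Real.sin (α - β) - Real.sin (2 * (a i - a j) + α + β))

/-- The phase-to-coupling block of the linearization. -/
noncomputable def linB (N : ℕ) (α : ℝ) (a : Fin N → ℝ) :
    Matrix (Fin N) (Fin N × Fin N) ℝ :=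
  Matrix.of fun k p =>
    if k = p.1 then -(1 / (N : ℝ)) * Real.sin (a p.1 - a p.2 + α) else 0

/-- The coupling-to-phase block of the linearization. -/
noncomputable def linC (N : ℕ) (β ε : ℝ) (a : Fin N → ℝ) :
    Matrix (Fin N × Fin N) (Fin N) ℝ :=
  Matrix.of fun p l =>
    if p.1 = p.2 then 0
    else if l = p.1 then -ε * Real.cos (a p.1 - a p.2 + β)
    else if l = p.2 then ε * Real.cos (a p.1 - a p.2 + β)
    else 0

/-- The linearization matrix `J(a)` of the adaptive phase-oscillator network at a
one-cluster state with phase lags `a`. -/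
noncomputable def linJ (N : ℕ) (α β ε : ℝ) (a : Fin N → ℝ) :
    Matrix (Fin N ⊕ Fin N × Fin N) (Fin N ⊕ Fin N × Fin N) ℝ :=
  Matrix.fromBlocks (linA N α β a) (linB N α a) (linC N β ε a)
    (-(ε • (1 : Matrix (Fin N × Fin N) (Fin N × Fin N) ℝ)))

/-- The characteristic polynomial of the linearization at a double antipodal one-cluster
state with `Q1` phases in `{0, π}` and `Q2` phases in `{ψ, ψ + π}`. -/
theorem charpoly_double_antipodal
    (N : ℕ) (hN : 2 ≤ N) (α β ψ ε : ℝ) (hε : 0 < ε)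
    (Q1 Q2 : ℕ) (hQ1 : 1 ≤ Q1) (hQ2 : 1 ≤ Q2) (hQ : Q1 + Q2 = N)
    (q1 q2 : ℝ) (hq1 : q1 = (Q1 : ℝ) / (N : ℝ)) (hq2 : q2 = (Q2 : ℝ) / (N : ℝ))
    (a : Fin N → ℝ) (S : Finset (Fin N)) (hS : S.card = Q1)
    (haS : ∀ i ∈ S, a i = 0 ∨ a i = Real.pi)
    (haSc : ∀ i ∉ S, a i = ψ ∨ a i = ψ + Real.pi) :
    (linJ N α β ε a).charpoly =
      X * (X + C ε) ^ (N * (N - 1) + 1) *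
        (X ^ 2
          + C ((1 / 2) * (Real.sin (α - β) - q1 * Real.sin (α + β)
              - q2 * Real.sin (-2 * ψ + α + β) + 2 * ε)) * X
          - C (ε * q1 * Real.sin (α + β) + ε * q2 * Real.sin (-2 * ψ + α + β)))
          ^ (Q1 - 1) *
        (X ^ 2
          + C ((1 / 2) * (Real.sin (α - β) - q1 * Real.sin (2 * ψ + α + β)
              - q2 * Real.sin (α + β) + 2 * ε)) * X
          - C (ε * q1 * Real.sin (2 * ψ + α + β) + ε * q2 * Real.sin (α + β)))
          ^ (Q2 - 1) *
        (X ^ 2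
          + C ((1 / 2) * (Real.sin (α - β) - q1 * Real.sin (2 * ψ + α + β)
              - q2 * Real.sin (-2 * ψ + α + β) + 2 * ε)) * X
          - C (ε * q1 * Real.sin (2 * ψ + α + β)
              + ε * q2 * Real.sin (-2 * ψ + α + β))) := by
  classical
  have hN0 : (N : ℝ) ≠ 0 := Nat.cast_ne_zero.mpr (by omega)
  set δ : ℝ := Real.sin (α - β) with hδ
  set σ0 : ℝ := Real.sin (α + β) with hσ0
  set σm : ℝ := Real.sin (-2 * ψ + α + β) with hσm
  set σp : ℝ := Real.sin (2 * ψ + α + β) with hσp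
  set P1 : ℝ[X] := X ^ 2 + C ((1 / 2) * (δ - q1 * σ0 - q2 * σm + 2 * ε)) * X
      - C (ε * q1 * σ0 + ε * q2 * σm) with hP1
  set P2 : ℝ[X] := X ^ 2 + C ((1 / 2) * (δ - q1 * σp - q2 * σ0 + 2 * ε)) * X
      - C (ε * q1 * σp + ε * q2 * σ0) with hP2
  set P3 : ℝ[X] := X ^ 2 + C ((1 / 2) * (δ - q1 * σp - q2 * σm + 2 * ε)) * X
      - C (ε * q1 * σp + ε * q2 * σm) with hP3
  set g : Fin N → Bool := fun i => decide (i ∈ S) with hg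
  set sg : Bool → Bool → ℝ :=
    fun bi bj => if bi = bj then σ0 else if bi then σm else σp with hsgdef
  set Eb : Bool → Bool → ℝ[X] :=
    fun bi bj => C ((sg bi bj - δ) / (2 * (N : ℝ))) * X + C (ε * sg bi bj / (N : ℝ))
    with hEbdef
  set Pb : Bool → ℝ[X] := fun b => if b then P1 else P2 with hPbdef
  have hsgtt : sg true true = σ0 := by simp [hsgdef]
  have hsgff : sg false false = σ0 := by simp [hsgdef]
  have hsgtf : sg true false = σm := by simp [hsgdef]
  have hsgft : sg false true = σp := by simp [hsgdef]
  have hsgdiag : ∀ b, sg b b = σ0 := by intro b; simp [hsgdef]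
  have hfilter1 : Finset.univ.filter (fun k => g k = true) = S := by
    ext k; simp [hg]
  have hcard1 : (Finset.univ.filter (fun k : Fin N => g k = true)).card = Q1 := by
    rw [hfilter1, hS]
  have hcard2 : (Finset.univ.filter (fun k : Fin N => g k = false)).card = Q2 := by
    have h2 : Finset.univ.filter (fun k : Fin N => g k = false) = Sᶜ := by
      ext k; simp [hg]
    rw [h2, Finset.card_compl, hS, Fintype.card_fin]; omega
  have hclasssum : ∀ f : Bool → ℝ,
      (∑ k, f (g k)) = (Q1 : ℝ) * f true + (Q2 : ℝ) * f false := by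
    intro f
    rw [← Finset.sum_filter_add_sum_filter_not Finset.univ (fun k => g k = true)]
    have e1 : ∀ k ∈ Finset.univ.filter (fun k : Fin N => g k = true), f (g k) = f true :=
      fun k hk => by rw [(Finset.mem_filter.mp hk).2]
    have e2 : ∀ k ∈ Finset.univ.filter (fun k : Fin N => ¬ g k = true), f (g k) = f false :=
      fun k hk => by
        have h := (Finset.mem_filter.mp hk).2
        rw [Bool.not_eq_true] at h; rw [h]
    have hcard2' : (Finset.univ.filter (fun k : Fin N => ¬ g k = true)).card = Q2 := by
      rw [← hcard2]; congr 1; ext k; simp [Bool.not_eq_true]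
    rw [Finset.sum_congr rfl e1, Finset.sum_congr rfl e2, Finset.sum_const, Finset.sum_const,
      hcard1, hcard2', nsmul_eq_mul, nsmul_eq_mul]
  have hab : ∀ i : Fin N,
      a i = (if i ∈ S then (0:ℝ) else ψ) ∨ a i = (if i ∈ S then (0:ℝ) else ψ) + Real.pi := by
    intro i
    by_cases h : i ∈ S
    · rcases haS i h with h1 | h1 <;> simp [h, h1]
    · rcases haSc i h with h1 | h1 <;> simp [h, h1]
  have key : ∀ i j : Fin N, Real.sin (2 * (a i - a j) + α + β) = sg (g i) (g j) := by
    intro i j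
    have step1 : Real.sin (2 * (a i - a j) + α + β)
        = Real.sin (2 * ((if i ∈ S then (0:ℝ) else ψ) - (if j ∈ S then (0:ℝ) else ψ))
            + α + β) := by
      rcases hab i with h1 | h1 <;> rcases hab j with h2 | h2
      · rw [h1, h2]
      · rw [show 2 * (a i - a j) + α + β
            = (2 * ((if i ∈ S then (0:ℝ) else ψ) - (if j ∈ S then (0:ℝ) else ψ)) + α + β)
              - 2 * Real.pi by rw [h1, h2]; ring, Real.sin_sub_two_pi]
      · rw [show 2 * (a i - a j) + α + β
            = (2 * ((if i ∈ S then (0:ℝ) else ψ) - (if j ∈ S then (0:ℝ) else ψ)) + α + β)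
              + 2 * Real.pi by rw [h1, h2]; ring, Real.sin_add_two_pi]
      · rw [show 2 * (a i - a j) + α + β
            = 2 * ((if i ∈ S then (0:ℝ) else ψ) - (if j ∈ S then (0:ℝ) else ψ)) + α + β by
            rw [h1, h2]; ring]
    rw [step1]
    by_cases hi : i ∈ S <;> by_cases hj : j ∈ S
    · have hgi : g i = true := by simp [hg, hi]
      have hgj : g j = true := by simp [hg, hj]
      rw [if_pos hi, if_pos hj, hgi, hgj, hsgtt, hσ0]
      congr 1; ring
    · have hgi : g i = true := by simp [hg, hi]
      have hgj : g j = false := by simp [hg, hj]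
      rw [if_pos hi, if_neg hj, hgi, hgj, hsgtf, hσm]
      congr 1; ring
    · have hgi : g i = false := by simp [hg, hi]
      have hgj : g j = true := by simp [hg, hj]
      rw [if_neg hi, if_pos hj, hgi, hgj, hsgft, hσp]
      congr 1; ring
    · have hgi : g i = false := by simp [hg, hi]
      have hgj : g j = false := by simp [hg, hj]
      rw [if_neg hi, if_neg hj, hgi, hgj, hsgff, hσ0]
      congr 1; ring
  have hsum : ∀ i, (∑ k, Real.sin (2 * (a i - a k) + α + β))
      = (Q1 : ℝ) * sg (g i) true + (Q2 : ℝ) * sg (g i) false := by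
    intro i
    rw [Finset.sum_congr rfl (fun k _ => key i k)]
    exact hclasssum (fun b => sg (g i) b)
  have hAdiag : ∀ i, linA N α β a i i
      = -(1/2) * δ - (1/(N:ℝ)) * ((σ0 - δ)/2)
        + (1/(2*(N:ℝ))) * ((Q1:ℝ) * sg (g i) true + (Q2:ℝ) * sg (g i) false) := by
    intro i
    have hsc : Real.sin β * Real.cos α = (σ0 - δ)/2 := by
      rw [hσ0, hδ, Real.sin_add, Real.sin_sub]; ring
    simp only [linA, Matrix.of_apply, eq_self_iff_true, if_true]
    rw [hsum i, mul_assoc (1/(N:ℝ)), hsc, ← hδ]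
  have hAoff : ∀ i j, i ≠ j →
      linA N α β a i j = (1/(2*(N:ℝ))) * (δ - sg (g i) (g j)) := by
    intro i j hij
    simp only [linA, Matrix.of_apply, if_neg hij]
    rw [key i j, ← hδ]
  have hBC : ∀ i j : Fin N, (linB N α a * linC N β ε a) i j
      = if i = j
        then (ε/(2*(N:ℝ))) * ((Q1:ℝ) * sg (g i) true + (Q2:ℝ) * sg (g i) false
              + (N:ℝ) * δ - σ0 - δ)
        else -(ε/(2*(N:ℝ))) * (sg (g i) (g j) + δ) := by
    intro i j
    rw [Matrix.mul_apply, Fintype.sum_prod_type]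
    have houter : ∀ p1 : Fin N, (∑ p2, linB N α a i (p1, p2) * linC N β ε a (p1, p2) j)
        = if p1 = i then (∑ p2, (-(1/(N:ℝ)) * Real.sin (a i - a p2 + α))
            * linC N β ε a (i, p2) j) else 0 := by
      intro p1
      by_cases h : p1 = i
      · subst h
        simp only [if_pos rfl]
        refine Finset.sum_congr rfl fun p2 _ => ?_
        simp [linB]
      · simp only [if_neg h]
        refine Finset.sum_eq_zero fun p2 _ => ?_
        have h' : ¬ (i = p1) := fun hh => h hh.symm
        simp [linB, h']
    rw [Finset.sum_congr rfl (fun p1 _ => houter p1)]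
    simp only [Finset.sum_ite_eq', Finset.mem_univ, ite_true]
    by_cases hij : i = j
    · subst hij
      rw [if_pos (rfl : i = i)]
      have hterm : ∀ p2, (-(1/(N:ℝ)) * Real.sin (a i - a p2 + α)) * linC N β ε a (i, p2) i
          = if i = p2 then 0 else (ε/(2*(N:ℝ))) * (sg (g i) (g p2) + δ) := by
        intro p2
        by_cases h : i = p2
        · rw [if_pos h]
          simp [linC, h]
        · rw [if_neg h]
          have hval : linC N β ε a (i, p2) i = -ε * Real.cos (a i - a p2 + β) := by
            simp [linC, h]
          rw [hval]
          have h1 := sin_mul_cos_aux (a i - a p2) α β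
          rw [key i p2, ← hδ] at h1
          linear_combination (ε / (N:ℝ)) * h1
      rw [Finset.sum_congr rfl (fun p2 _ => hterm p2)]
      have hsplit : ∀ p2 : Fin N, (if i = p2 then 0 else (ε/(2*(N:ℝ))) * (sg (g i) (g p2) + δ))
          = (ε/(2*(N:ℝ))) * (sg (g i) (g p2) + δ)
            - (if i = p2 then (ε/(2*(N:ℝ))) * (sg (g i) (g p2) + δ) else 0) := by
        intro p2; by_cases h : i = p2 <;> simp [h]
      rw [Finset.sum_congr rfl (fun p2 _ => hsplit p2), Finset.sum_sub_distrib,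
        Finset.sum_ite_eq, if_pos (Finset.mem_univ i)]
      have hsum2 : (∑ p2, (ε/(2*(N:ℝ))) * (sg (g i) (g p2) + δ))
          = (ε/(2*(N:ℝ))) * ((Q1:ℝ) * sg (g i) true + (Q2:ℝ) * sg (g i) false + (N:ℝ) * δ) := by
        rw [← Finset.mul_sum]
        congr 1
        rw [Finset.sum_add_distrib, hclasssum (fun b => sg (g i) b), Finset.sum_const,
          Finset.card_univ, Fintype.card_fin, nsmul_eq_mul]
      rw [hsum2, hsgdiag]
      ring
    · rw [if_neg hij]
      have hterm : ∀ p2, (-(1/(N:ℝ)) * Real.sin (a i - a p2 + α)) * linC N β ε a (i, p2) j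
          = if p2 = j then -(ε/(2*(N:ℝ))) * (sg (g i) (g j) + δ) else 0 := by
        intro p2
        by_cases h : p2 = j
        · subst h
          rw [if_pos rfl]
          have hval : linC N β ε a (i, p2) p2 = ε * Real.cos (a i - a p2 + β) := by
            have h2 : ¬ p2 = i := fun hh => hij hh.symm
            simp [linC, hij, h2]
          rw [hval]
          have h1 := sin_mul_cos_aux (a i - a p2) α β
          rw [key i p2, ← hδ] at h1
          linear_combination (-(ε / (N:ℝ))) * h1
        · rw [if_neg h]
          have hval : linC N β ε a (i, p2) j = 0 := by
            have h4 : ¬ j = i := fun hh => hij hh.symm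
            have h5 : ¬ j = p2 := fun hh => h hh.symm
            by_cases h3 : i = p2
            · simp [linC, h3]
            · simp [linC, h3, h4, h5]
          rw [hval, mul_zero]
      rw [Finset.sum_congr rfl (fun p2 _ => hterm p2)]
      simp only [Finset.sum_ite_eq', Finset.mem_univ, ite_true]
  -- Structural form of the Schur-complement-like matrix
  have hMstr : (X + C ε) • charmatrix (linA N α β a)
        - ((linB N α a * linC N β ε a).map (C : ℝ →+* ℝ[X]))
      = Matrix.of (fun i j => (if i = j then Pb (g i) else 0) + Eb (g i) (g j)) := by
    refine Matrix.ext fun i j => ?_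
    by_cases hij : i = j
    · subst hij
      rw [Matrix.sub_apply, Matrix.smul_apply, charmatrix_apply_eq, Matrix.map_apply,
        Matrix.of_apply, if_pos (rfl : i = i), hAdiag i, hBC i i, if_pos (rfl : i = i),
        smul_eq_mul]
      cases hgi : g i
      · have hPbf : Pb false = P2 := by simp [hPbdef]
        rw [hPbf, hsgft, hsgff, hP2, hEbdef]
        simp only [hsgff]
        exact diag_poly (N:ℝ) (Q1:ℝ) (Q2:ℝ) q1 q2 δ σ0 σp σ0 ε hN0 hq1 hq2
      · have hPbt : Pb true = P1 := by simp [hPbdef]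
        rw [hPbt, hsgtt, hsgtf, hP1, hEbdef]
        simp only [hsgtt]
        exact diag_poly (N:ℝ) (Q1:ℝ) (Q2:ℝ) q1 q2 δ σ0 σ0 σm ε hN0 hq1 hq2
    · rw [Matrix.sub_apply, Matrix.smul_apply, charmatrix_apply_ne _ _ _ hij, Matrix.map_apply,
        Matrix.of_apply, if_neg hij, hAoff i j hij, hBC i j, if_neg hij, smul_eq_mul,
        zero_add, hEbdef]
      exact offdiag_poly (N:ℝ) δ (sg (g i) (g j)) ε hN0
  -- Nonvanishing
  have hP1ne : P1 ≠ 0 := fun h => by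
    have h2 := congrArg (fun p => Polynomial.coeff p 2) h
    simp [hP1, coeff_X_pow] at h2
  have hP2ne : P2 ≠ 0 := fun h => by
    have h2 := congrArg (fun p => Polynomial.coeff p 2) h
    simp [hP2, coeff_X_pow] at h2
  have hPbne : ∀ s : Bool, Pb s ≠ 0 := by
    intro s; cases s
    · simpa [hPbdef] using hP2ne
    · simpa [hPbdef] using hP1ne
  have hXne : (X + C ε : ℝ[X]) ≠ 0 := Polynomial.X_add_C_ne_zero ε
  -- charpoly times (X + C ε)^N
  have hDblock : charmatrix (-(ε • (1 : Matrix (Fin N × Fin N) (Fin N × Fin N) ℝ)))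
      = (X + C ε) • (1 : Matrix (Fin N × Fin N) (Fin N × Fin N) ℝ[X]) := by
    refine Matrix.ext fun p q => ?_
    by_cases h : p = q
    · subst h
      rw [charmatrix_apply_eq, Matrix.smul_apply]
      simp [Matrix.one_apply]
    · rw [charmatrix_apply_ne _ _ _ h, Matrix.smul_apply]
      simp [Matrix.one_apply, h]
  have hstep2 : (linJ N α β ε a).charpoly * (X + C ε) ^ N
      = ((X + C ε) • charmatrix (linA N α β a)
          - ((linB N α a * linC N β ε a).map (C : ℝ →+* ℝ[X]))).det
        * (X + C ε) ^ (N * N) := by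
    have hchar : charmatrix (linJ N α β ε a)
        = Matrix.fromBlocks (charmatrix (linA N α β a)) (-(linB N α a).map C)
            (-(linC N β ε a).map C) ((X + C ε) • 1) := by
      rw [linJ, charmatrix_fromBlocks, hDblock]
    have hdet := det_fromBlocks_smul_one (charmatrix (linA N α β a)) (-(linB N α a).map C)
        (-(linC N β ε a).map C) (X + C ε)
    rw [Matrix.neg_mul, Matrix.mul_neg, neg_neg, ← Matrix.map_mul] at hdet
    rw [Matrix.charpoly, hchar]
    simpa [Fintype.card_fin, Fintype.card_prod] using hdet
  -- determinant of the structured matrix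
  have hdetM : (Matrix.of (fun i j => (if i = j then Pb (g i) else 0) + Eb (g i) (g j))).det
      = X * (X + C ε) * P3 * P1 ^ (Q1 - 1) * P2 ^ (Q2 - 1) := by
    have hPbt : Pb true = P1 := by simp [hPbdef]
    have hPbf : Pb false = P2 := by simp [hPbdef]
    have hcore' : (Pb true + C ((Q1:ℕ) : ℝ) * Eb true true)
          * (Pb false + C ((Q2:ℕ) : ℝ) * Eb false false)
        - (C ((Q1:ℕ) : ℝ) * Eb true false) * (C ((Q2:ℕ) : ℝ) * Eb false true)
        = X * (X + C ε) * P3 := by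
      rw [hPbt, hPbf, hEbdef]
      simp only [hsgtt, hsgff, hsgtf, hsgft]
      rw [hP1, hP2, hP3]
      exact core_poly (N:ℝ) (Q1:ℝ) (Q2:ℝ) q1 q2 δ σ0 σp σm ε hN0
        (by rw [← hQ]; push_cast; ring) hq1 hq2
    clear_value Eb Pb
    set K := FractionRing (Polynomial ℝ) with hK
    set φ : ℝ[X] →+* K := algebraMap (Polynomial ℝ) K with hφdef
    have hφ : Function.Injective φ := IsFractionRing.injective _ _
    apply hφ
    rw [RingHom.map_det]
    have hmap : (φ.mapMatrix (Matrix.of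
          (fun i j => (if i = j then Pb (g i) else 0) + Eb (g i) (g j))))
        = Matrix.of (fun i j => (if i = j then φ (Pb (g i)) else 0) + φ (Eb (g i) (g j))) := by
      refine Matrix.ext fun i j => ?_
      simp [RingHom.mapMatrix_apply, Matrix.map_apply, apply_ite φ]
    have hPbne' : ∀ s, φ (Pb s) ≠ 0 := fun s h => hPbne s (by
      apply hφ; rw [h, map_zero])
    rw [hmap, det_two_class g (fun s => φ (Pb s)) (fun s t => φ (Eb s t)) hPbne'
      Q1 Q2 hcard1 hcard2]
    have hcoreK := congrArg φ hcore'
    simp only [map_sub, _root_.map_mul, map_add, Polynomial.C_eq_natCast,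
      map_natCast] at hcoreK
    have e1 : φ (Pb true) ^ Q1 = φ (Pb true) ^ (Q1 - 1) * φ (Pb true) := by
      conv_lhs => rw [show Q1 = (Q1 - 1) + 1 by omega]
      rw [pow_succ]
    have e2 : φ (Pb false) ^ Q2 = φ (Pb false) ^ (Q2 - 1) * φ (Pb false) := by
      conv_lhs => rw [show Q2 = (Q2 - 1) + 1 by omega]
      rw [pow_succ]
    simp only [_root_.map_mul, map_pow, map_add]
    rw [← hPbt, ← hPbf, e1, e2, ← hcoreK]
    rw [div_eq_mul_inv, div_eq_mul_inv, div_eq_mul_inv, div_eq_mul_inv]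
    linear_combination (φ (Pb true) ^ (Q1 - 1) * φ (Pb false) ^ (Q2 - 1) *
        ((Q1:K) * φ (Eb true true) * φ (Pb false)
          + (Q1:K) * (Q2:K) * φ (Eb true true) * φ (Eb false false)
          - (Q1:K) * (Q2:K) * φ (Eb true false) * φ (Eb false true)))
        * mul_inv_cancel₀ (hPbne' true)
      + (φ (Pb true) ^ (Q1 - 1) * φ (Pb false) ^ (Q2 - 1) *
        ((Q2:K) * φ (Eb false false) * φ (Pb true)
          + (Q1:K) * (Q2:K) * φ (Eb true true) * φ (Eb false false) * φ (Pb true)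
            * (φ (Pb true))⁻¹
          - (Q1:K) * (Q2:K) * φ (Eb true false) * φ (Eb false true) * φ (Pb true)
            * (φ (Pb true))⁻¹))
        * mul_inv_cancel₀ (hPbne' false)
  -- final assembly
  apply mul_right_cancel₀ (pow_ne_zero N hXne)
  rw [hstep2, hMstr, hdetM]
  have hexp : (X + C ε : ℝ[X]) ^ (N * (N - 1) + 1) * (X + C ε) ^ N
      = (X + C ε) ^ (N * N) * (X + C ε) := by
    rw [← pow_add, ← pow_succ]
    congr 1
    obtain ⟨M, rfl⟩ : ∃ M, N = M + 1 := ⟨N - 1, by omega⟩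
    simp [Nat.add_sub_cancel]
    ring
  linear_combination (-(X * P1 ^ (Q1 - 1) * P2 ^ (Q2 - 1) * P3)) * hexp
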